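/- Let S be an independent set in a matroid and let B be a basis of the matroid. Then there is an injection φ: S → B such that for each x ∈ S, the element φ(x) is not in S \ {x} and the set (S \ {x}) ∪ {φ(x)} is independent, and for each b ∈ B \ φ(S), we have b ∉ S and the set S ∪ {b} is independent. -/

import Mathlib

open Set

/-- Hall condition for the exchange bipartite graph between `S \ B` and `B \ B'`. -/
lemma hall_aux {α : Type*} (M : Matroid α) [M.Finite] {S B B' : Set α}
    (hS : M.Indep S) (hB : M.IsBase B) (hB' : M.IsBase B') (hSB' : S ⊆ B')
    (hB'u : B' ⊆ S ∪ B)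
    (T N : Set α) (hT : T ⊆ S \ B) (hN : N ⊆ B \ B')
    (hNdef : ∀ y ∈ (B \ B') \ N, ∀ x ∈ T, ¬ M.Indep (insert y (S \ {x}))) :
    T.ncard ≤ N.ncard := by
  have hE : M.E.Finite := M.ground_finite
  have finS : S.Finite := hE.subset hS.subset_ground
  have finB : B.Finite := hE.subset hB.subset_ground
  rcases T.eq_empty_or_nonempty with rfl | hTne
  · simp
  set D : Set α := (B \ B') \ N with hD
  -- every element of D is in the closure of `S \ T`
  have hDcl : D ⊆ M.closure (S \ T) := by
    intro y hy
    have h1 : ∀ x ∈ T, y ∈ M.closure (S \ {x}) := by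
      intro x hx
      have hyind := hNdef y hy x hx
      have hSx : M.Indep (S \ {x}) := hS.subset diff_subset
      have hynotin : y ∉ S \ {x} := fun h => hy.1.2 (hSB' h.1)
      rw [hSx.insert_indep_iff_of_notMem hynotin] at hyind
      by_contra hcl
      exact hyind ⟨hB.subset_ground hy.1.1, hcl⟩
    have hUnion : M.Indep (⋃ x ∈ T, S \ {x}) :=
      hS.subset (by simp only [iUnion_subset_iff]; exact fun x _ => diff_subset)
    have hclInter := M.closure_biInter_eq_biInter_closure_of_biUnion_indep hTne hUnion
    have hInterEq : (⋂ x ∈ T, S \ {x}) = S \ T := by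
      apply Set.eq_of_subset_of_subset
      · intro a ha
        obtain ⟨x0, hx0⟩ := hTne
        have haS : a ∈ S := (mem_iInter₂.mp ha x0 hx0).1
        refine ⟨haS, fun haT => ?_⟩
        exact (mem_iInter₂.mp ha a haT).2 rfl
      · intro a ha
        exact mem_iInter₂.mpr fun x hx => ⟨ha.1, fun h => ha.2 (h ▸ hx)⟩
    rw [hInterEq] at hclInter
    rw [hclInter]
    exact mem_iInter₂.mpr h1
  set X : Set α := (B \ D) ∪ (S \ T) with hX
  have hXE : X ⊆ M.E :=
    union_subset (diff_subset.trans hB.subset_ground) (diff_subset.trans hS.subset_ground)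
  have hBX : B ⊆ M.closure X := by
    intro b hb
    by_cases hbD : b ∈ D
    · exact M.closure_subset_closure subset_union_right (hDcl hbD)
    · exact M.subset_closure X hXE (Or.inl ⟨hb, hbD⟩)
  have hXspan : M.Spanning X := by
    rw [Matroid.spanning_iff_closure_eq hXE]
    apply subset_antisymm (M.closure_subset_ground X)
    calc M.E = M.closure B := hB.closure_eq.symm
    _ ⊆ M.closure (M.closure X) := M.closure_subset_closure hBX
    _ = M.closure X := M.closure_closure X
  obtain ⟨B'', hB'', hB''X⟩ := hXspan.exists_isBase_subset
  have finX : X.Finite := hE.subset hXE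
  -- cardinality chain
  have h1 : B.ncard ≤ X.ncard := by
    rw [← hB''.ncard_eq_ncard_of_isBase hB]
    exact ncard_le_ncard hB''X finX
  have h2 : X.ncard ≤ (B \ D).ncard + ((S \ T) \ (B \ D)).ncard := by
    have hXeq : X = (B \ D) ∪ ((S \ T) \ (B \ D)) := by rw [union_diff_self]
    rw [hXeq]
    exact ncard_union_le _ _
  have h3 : ((S \ T) \ (B \ D)).ncard ≤ ((S \ B) \ T).ncard := by
    apply ncard_le_ncard _ (finS.diff.diff)
    intro a ha
    refine ⟨⟨ha.1.1, fun haB => ?_⟩, ha.1.2⟩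
    exact ha.2 ⟨haB, fun hd => hd.1.2 (hSB' ha.1.1)⟩
  have h4 : ((S \ B) \ T).ncard = (S \ B).ncard - T.ncard :=
    ncard_diff hT (hE.subset (hT.trans (diff_subset.trans hS.subset_ground)))
  have h5 : (B \ D).ncard = B.ncard - D.ncard :=
    ncard_diff (diff_subset.trans diff_subset)
      (hE.subset ((diff_subset.trans diff_subset).trans hB.subset_ground))
  have h6 : (B \ B').ncard - N.ncard + N.ncard = (B \ B').ncard := by
    have hle : N.ncard ≤ (B \ B').ncard := ncard_le_ncard hN (finB.diff)
    omega
  have hDcard : D.ncard = (B \ B').ncard - N.ncard := ncard_diff hN (hE.subset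
    (hN.trans (diff_subset.trans hB.subset_ground)))
  have h7 : (B \ B').ncard = (S \ B).ncard := by
    have hd : B' \ B = S \ B := by
      apply Set.eq_of_subset_of_subset
      · exact fun a ha => ⟨(hB'u ha.1).resolve_right ha.2, ha.2⟩
      · exact fun a ha => ⟨hSB' ha.1, ha.2⟩
    rw [hB.ncard_diff_comm hB', hd]
  have h8 : T.ncard ≤ (S \ B).ncard := ncard_le_ncard hT (finS.diff)
  have h9 : D.ncard ≤ B.ncard :=
    ncard_le_ncard (diff_subset.trans diff_subset) finB
  have hNle : N.ncard ≤ (B \ B').ncard := ncard_le_ncard hN (finB.diff)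
  omega

/-- For an independent set `S` and a basis `B` of a matroid, there is an
injection `φ : S → B` such that `(S \ {x}) ∪ {φ x}` is independent for each `x ∈ S`
(with `φ x ∉ S \ {x}`), and `S ∪ {b}` is independent for each `b ∈ B \ φ(S)`
(with `b ∉ S`). -/
theorem stmt1 {α : Type*} (M : Matroid α) [M.Finite] (S B : Set α)
    (hS : M.Indep S) (hB : M.IsBase B) :
    ∃ φ : α → α, Set.InjOn φ S ∧ Set.MapsTo φ S B ∧
      (∀ x ∈ S, φ x ∉ S \ {x} ∧ M.Indep (insert (φ x) (S \ {x}))) ∧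
      (∀ b ∈ B \ (φ '' S), b ∉ S ∧ M.Indep (insert b S)) := by
  classical
  obtain ⟨B', hB', hSB', hB'u⟩ := hS.exists_isBase_subset_union_isBase hB
  have hE : M.E.Finite := M.ground_finite
  have finS : S.Finite := hE.subset hS.subset_ground
  have finB : B.Finite := hE.subset hB.subset_ground
  have finSB : (S \ B).Finite := finS.diff
  have finBB' : (B \ B').Finite := finB.diff
  haveI : Finite ↥(S \ B) := finSB.to_subtype
  set t : ↥(S \ B) → Finset α :=
    fun x => finBB'.toFinset.filter (fun y => M.Indep (insert y (S \ {x.1}))) with ht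
  -- Hall's condition
  have hall : ∀ s : Finset ↥(S \ B), s.card ≤ (s.biUnion t).card := by
    intro s
    set T : Set α := ↑(s.image Subtype.val) with hTdef
    set N : Set α := ↑(s.biUnion t) with hNdef'
    have hTsub : T ⊆ S \ B := by
      intro a ha
      simp only [hTdef, Finset.coe_image, mem_image, Finset.mem_coe] at ha
      obtain ⟨x, _, rfl⟩ := ha
      exact x.2
    have hNsub : N ⊆ B \ B' := by
      intro y hy
      simp only [hNdef', Finset.coe_biUnion, mem_iUnion, Finset.mem_coe] at hy
      obtain ⟨x, _, hx⟩ := hy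
      simp only [ht, Finset.mem_filter, Set.Finite.mem_toFinset] at hx
      exact hx.1
    have hNd : ∀ y ∈ (B \ B') \ N, ∀ x ∈ T, ¬ M.Indep (insert y (S \ {x})) := by
      intro y hy x hx hind
      simp only [hTdef, Finset.coe_image, mem_image, Finset.mem_coe] at hx
      obtain ⟨x', hx's, rfl⟩ := hx
      apply hy.2
      simp only [hNdef', Finset.coe_biUnion, mem_iUnion, Finset.mem_coe]
      exact ⟨x', hx's, by
        simp only [ht, Finset.mem_filter, Set.Finite.mem_toFinset]
        exact ⟨hy.1, hind⟩⟩
    have key := hall_aux M hS hB hB' hSB' hB'u T N hTsub hNsub hNd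
    have hTcard : T.ncard = s.card := by
      rw [hTdef, ncard_coe_finset, Finset.card_image_of_injective _ Subtype.val_injective]
    have hNcard : N.ncard = (s.biUnion t).card := by rw [hNdef', ncard_coe_finset]
    omega
  obtain ⟨f, hfinj, hft⟩ := (Finset.all_card_le_biUnion_card_iff_existsInjective' t).mp hall
  have hfmem : ∀ x : ↥(S \ B), f x ∈ B \ B' ∧ M.Indep (insert (f x) (S \ {x.1})) := by
    intro x
    have := hft x
    simp only [ht, Finset.mem_filter, Set.Finite.mem_toFinset] at this
    exact this
  set φ : α → α := fun a => if h : a ∈ S \ B then f ⟨a, h⟩ else a with hφ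
  have hφB : ∀ x ∈ S, x ∈ B → φ x = x := by
    intro x hx hxB
    simp only [hφ]
    rw [dif_neg (fun h => h.2 hxB)]
  have hφd : ∀ (x) (h : x ∈ S \ B), φ x = f ⟨x, h⟩ := by
    intro x h
    simp only [hφ, dif_pos h]
  -- φ restricted to S \ B is a bijection onto B \ B'
  have hφdi : Set.InjOn φ (S \ B) := by
    intro a ha b hb hab
    rw [hφd a ha, hφd b hb] at hab
    exact Subtype.mk.injEq a ha b hb ▸ congrArg Subtype.val (hfinj hab)
  have hφdimg : φ '' (S \ B) = B \ B' := by
    apply Set.eq_of_subset_of_ncard_le _ _ finBB'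
    · intro y hy
      obtain ⟨x, hx, rfl⟩ := hy
      rw [hφd x hx]
      exact (hfmem ⟨x, hx⟩).1
    · have h7 : (B \ B').ncard = (S \ B).ncard := by
        have hd : B' \ B = S \ B := by
          apply Set.eq_of_subset_of_subset
          · exact fun a ha => ⟨(hB'u ha.1).resolve_right ha.2, ha.2⟩
          · exact fun a ha => ⟨hSB' ha.1, ha.2⟩
        rw [hB.ncard_diff_comm hB', hd]
      rw [h7, ← ncard_image_of_injOn hφdi]
  have himg : φ '' S = (S ∩ B) ∪ (B \ B') := by
    apply Set.eq_of_subset_of_subset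
    · intro y hy
      obtain ⟨x, hx, rfl⟩ := hy
      by_cases hxB : x ∈ B
      · rw [hφB x hx hxB]; exact Or.inl ⟨hx, hxB⟩
      · right
        rw [← hφdimg]
        exact ⟨x, ⟨hx, hxB⟩, rfl⟩
    · rintro y (hy | hy)
      · exact ⟨y, hy.1, hφB y hy.1 hy.2⟩
      · rw [← hφdimg] at hy
        obtain ⟨x, hx, rfl⟩ := hy
        exact ⟨x, hx.1, rfl⟩
  refine ⟨φ, ?_, ?_, ?_, ?_⟩
  · -- InjOn
    intro a ha b hb hab
    by_cases haB : a ∈ B <;> by_cases hbB : b ∈ B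
    · rwa [hφB a ha haB, hφB b hb hbB] at hab
    · exfalso
      rw [hφB a ha haB, hφd b ⟨hb, hbB⟩] at hab
      exact (hfmem ⟨b, hb, hbB⟩).1.2 (hSB' (hab ▸ ha))
    · exfalso
      rw [hφB b hb hbB, hφd a ⟨ha, haB⟩] at hab
      exact (hfmem ⟨a, ha, haB⟩).1.2 (hSB' (hab ▸ hb))
    · exact hφdi ⟨ha, haB⟩ ⟨hb, hbB⟩ hab
  · -- MapsTo
    intro x hx
    by_cases hxB : x ∈ B
    · rw [hφB x hx hxB]; exact hxB
    · rw [hφd x ⟨hx, hxB⟩]; exact (hfmem ⟨x, hx, hxB⟩).1.1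
  · -- exchange property
    intro x hx
    by_cases hxB : x ∈ B
    · rw [hφB x hx hxB]
      refine ⟨fun h => h.2 rfl, ?_⟩
      rw [Set.insert_diff_singleton, Set.insert_eq_of_mem hx]
      exact hS
    · rw [hφd x ⟨hx, hxB⟩]
      refine ⟨fun h => (hfmem ⟨x, hx, hxB⟩).1.2 (hSB' h.1), (hfmem ⟨x, hx, hxB⟩).2⟩
  · -- extension property
    intro b hb
    rw [himg] at hb
    have hbB' : b ∈ B' := by
      by_contra hbB'
      exact hb.2 (Or.inr ⟨hb.1, hbB'⟩)
    have hbS : b ∉ S := fun hbS => hb.2 (Or.inl ⟨hbS, hb.1⟩)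
    exact ⟨hbS, hB'.indep.subset (insert_subset hbB' hSB')⟩
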